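/- arXiv:1910.08642 — 2 statements merged into one kernel-verified Lean document; each statement's English description precedes it below -/
import Mathlib

section
/- Let G be a group acting by measure-preserving transformations on a probability space (X,μ), Δ a group, w : G × X → Δ a cocycle, and t a measure-preserving bijection of X commuting with the G-action. Suppose ε ∈ (0,1) and a subset G₂' = {h ∈ G : μ(A_h^t) > 1 − ε/4} satisfies the dichotomy: for every h ∈ G, either μ(A_h^t) < ε/4 or μ(A_h^t) > 1 − ε/4, where A_h^t = {x : w(h,x) = w(h,t⁻¹·x)}. Then G₂' is a subgroup of G. -/
open MeasureTheory

theorem stmt2 {G X Δ : Type*} [Group G] [Group Δ] [MulAction G X]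
    [MeasurableSpace X] (μ : Measure X) [IsProbabilityMeasure μ]
    (hG : ∀ g : G, MeasurePreserving (fun x : X => g • x) μ μ)
    (t : X ≃ X) (ht : MeasurePreserving t μ μ)
    (hcomm : ∀ (g : G) (x : X), t (g • x) = g • t x)
    (w : G → X → Δ)
    (hw : ∀ (g h : G) (x : X), w (g * h) x = w g (h • x) * w h x)
    (hmeas : ∀ g : G, MeasurableSet {x | w g x = w g (t.symm x)})
    (ε : ℝ) (hε0 : 0 < ε) (hε1 : ε < 1)
    (hdich : ∀ h : G, (μ {x | w h x = w h (t.symm x)}).toReal < ε / 4 ∨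
      1 - ε / 4 < (μ {x | w h x = w h (t.symm x)}).toReal) :
    ∃ H : Subgroup G,
      (H : Set G) = {h : G | 1 - ε / 4 < (μ {x | w h x = w h (t.symm x)}).toReal} := by
  -- basic cocycle facts
  have w1 : ∀ x : X, w 1 x = 1 := by
    intro x
    have h1 := hw 1 1 x
    simp only [mul_one, one_smul] at h1
    exact (left_eq_mul.mp h1)
  have winv : ∀ (h : G) (x : X), w h⁻¹ x = (w h (h⁻¹ • x))⁻¹ := by
    intro h x
    have h1 := hw h h⁻¹ x
    rw [mul_inv_cancel, w1] at h1
    exact eq_inv_of_mul_eq_one_right h1.symm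
  have tsymm_comm : ∀ (g : G) (x : X), t.symm (g • x) = g • t.symm x := by
    intro g x
    apply t.injective
    rw [t.apply_symm_apply, hcomm, t.apply_symm_apply]
  set S : G → Set X := fun g => {x | w g x = w g (t.symm x)} with hS
  -- identity
  have hone : 1 - ε / 4 < (μ (S 1)).toReal := by
    have : S 1 = Set.univ := by
      ext x; simp [hS, w1]
    rw [this]
    simp only [measure_univ, ENNReal.toReal_one]
    linarith
  -- inverse
  have hinvS : ∀ h : G, S h⁻¹ = (fun x => h⁻¹ • x) ⁻¹' S h := by
    intro h
    ext x
    simp only [hS, Set.mem_setOf_eq, Set.mem_preimage, winv, tsymm_comm, inv_inj]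
  have hinv_meas : ∀ h : G, μ (S h⁻¹) = μ (S h) := by
    intro h
    rw [hinvS h]
    exact (hG h⁻¹).measure_preimage (hmeas h).nullMeasurableSet
  -- multiplication subset
  have hmulS : ∀ a b : G, S b ∩ (fun x => b • x) ⁻¹' S a ⊆ S (a * b) := by
    intro a b x hx
    obtain ⟨h1, h2⟩ := hx
    simp only [hS, Set.mem_setOf_eq, Set.mem_preimage] at h1 h2 ⊢
    rw [hw, hw, h1, h2, tsymm_comm]
  have key : ∀ a b : G, 1 - ε / 4 < (μ (S a)).toReal → 1 - ε / 4 < (μ (S b)).toReal →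
      1 - ε / 4 < (μ (S (a * b))).toReal := by
    intro a b ha hb
    have hma : MeasurableSet ((fun x => b • x) ⁻¹' S a) := (hG b).measurable (hmeas a)
    have hmb : MeasurableSet (S b) := hmeas b
    have hpre : μ ((fun x => b • x) ⁻¹' S a) = μ (S a) :=
      (hG b).measure_preimage (hmeas a).nullMeasurableSet
    have hunion : μ (S b ∪ (fun x => b • x) ⁻¹' S a) + μ (S b ∩ (fun x => b • x) ⁻¹' S a)
        = μ (S b) + μ ((fun x => b • x) ⁻¹' S a) := measure_union_add_inter _ hma
    have hle : μ (S b) + μ ((fun x => b • x) ⁻¹' S a)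
        ≤ 1 + μ (S b ∩ (fun x => b • x) ⁻¹' S a) := by
      rw [← hunion]
      gcongr
      exact prob_le_one
    have hfin : ∀ s : Set X, μ s ≠ ⊤ := fun s => measure_ne_top μ s
    have hle' : (μ (S b)).toReal + (μ (S a)).toReal
        ≤ 1 + (μ (S b ∩ (fun x => b • x) ⁻¹' S a)).toReal := by
      have := ENNReal.toReal_mono (by simp [hfin]) hle
      rw [ENNReal.toReal_add (hfin _) (hfin _), ENNReal.toReal_add (by simp) (hfin _),
        hpre, ENNReal.toReal_one] at this
      exact this
    have hinter : ε / 4 ≤ (μ (S b ∩ (fun x => b • x) ⁻¹' S a)).toReal := by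
      nlinarith
    have hmono : (μ (S b ∩ (fun x => b • x) ⁻¹' S a)).toReal ≤ (μ (S (a * b))).toReal :=
      ENNReal.toReal_mono (hfin _) (measure_mono (hmulS a b))
    rcases hdich (a * b) with h | h
    · exfalso; exact absurd (lt_of_le_of_lt (hinter.trans hmono) h) (lt_irrefl _)
    · exact h
  refine ⟨{ carrier := {h : G | 1 - ε / 4 < (μ {x | w h x = w h (t.symm x)}).toReal}
            one_mem' := hone
            mul_mem' := fun {a b} ha hb => key a b ha hb
            inv_mem' := fun {a} ha => by
              simp only [Set.mem_setOf_eq] at ha ⊢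
              have := hinv_meas a
              rw [show {x | w a⁻¹ x = w a⁻¹ (t.symm x)} = S a⁻¹ from rfl, this]
              exact ha }, rfl⟩
end

section
/- Let K be a compact group with Haar probability measure, M ≤ K a closed subgroup, and Γ ≤ K a subgroup. Suppose L ≤ K is an open subgroup such that Γ ∩ L is dense in L. Then the image LM/M ⊆ K/M is an ergodic component for the left-translation action of Γ ∩ L on K/M: the action of Γ ∩ L on (LM/M, normalized measure) is ergodic. -/
open MeasureTheory Set Filter Topology
open scoped symmDiff Pointwise

theorem stmt17 {K : Type*} [Group K] [TopologicalSpace K] [IsTopologicalGroup K]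
    [CompactSpace K] [T2Space K] [SecondCountableTopology K]
    [MeasurableSpace K] [BorelSpace K]
    (μ : Measure K) [μ.IsHaarMeasure] [IsProbabilityMeasure μ]
    (M : Subgroup K) (hM : IsClosed (M : Set K))
    (Γ L : Subgroup K) (hL : IsOpen (L : Set K))
    (hdense : (L : Set K) ⊆ closure ((Γ ⊓ L : Subgroup K) : Set K)) :
    ∀ A : Set (K ⧸ M), MeasurableSet A →
      A ⊆ QuotientGroup.mk '' (L : Set K) →
      (∀ γ ∈ Γ ⊓ L,
        (Measure.map QuotientGroup.mk μ) (symmDiff ((fun z : K ⧸ M => γ • z) ⁻¹' A) A) = 0) →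
      (Measure.map QuotientGroup.mk μ) A = 0 ∨
        (Measure.map QuotientGroup.mk μ) ((QuotientGroup.mk '' (L : Set K)) \ A) = 0 := by
  intro A hA hAL hinv
  have hmk : Measurable (QuotientGroup.mk : K → K ⧸ M) := QuotientGroup.measurable_coe
  set B : Set K := (QuotientGroup.mk : K → K ⧸ M) ⁻¹' A with hBdef
  have hB : MeasurableSet B := hmk hA
  set LM : Set K := (L : Set K) * (M : Set K) with hLMdef
  -- the preimage of the image of L is the set L * M
  have hpre : (QuotientGroup.mk : K → K ⧸ M) ⁻¹' (QuotientGroup.mk '' (L : Set K)) = LM := by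
    ext x
    simp only [mem_preimage, mem_image, hLMdef, Set.mem_mul]
    constructor
    · rintro ⟨l, hl, hlx⟩
      exact ⟨l, hl, l⁻¹ * x, QuotientGroup.eq.mp hlx, by group⟩
    · rintro ⟨l, hl, m, hm, rfl⟩
      exact ⟨l, hl, (QuotientGroup.mk_mul_of_mem l hm).symm⟩
  have hBLM : B ⊆ LM := by
    rw [← hpre]; exact Set.preimage_mono hAL
  -- B is invariant under right multiplication by M
  have hBM : ∀ x ∈ B, ∀ m ∈ M, x * m ∈ B := by
    intro x hx m hm
    have : (QuotientGroup.mk (x * m) : K ⧸ M) = QuotientGroup.mk x :=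
      QuotientGroup.mk_mul_of_mem x hm
    simpa only [hBdef, mem_preimage, this] using hx
  -- transfer the invariance hypothesis to K
  have hinvK : ∀ γ ∈ (Γ ⊓ L : Subgroup K), μ (((γ * ·) ⁻¹' B) ∆ B) = 0 := by
    intro γ hγ
    have hsub : ((γ * ·) ⁻¹' B) ∆ B =
        (QuotientGroup.mk : K → K ⧸ M) ⁻¹' (((fun z : K ⧸ M => γ • z) ⁻¹' A) ∆ A) := by
      rw [Set.preimage_symmDiff]
      rfl
    refine le_antisymm ?_ (zero_le)
    calc μ (((γ * ·) ⁻¹' B) ∆ B)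
        ≤ (Measure.map QuotientGroup.mk μ) (((fun z : K ⧸ M => γ • z) ⁻¹' A) ∆ A) := by
          rw [hsub]; exact Measure.le_map_apply hmk.aemeasurable _
      _ = 0 := hinv γ hγ
  -- extend the invariance to all of L using the density of Γ ⊓ L and continuity
  have hinvL : ∀ g ∈ L, μ (((g * ·) ⁻¹' B) ∆ B) = 0 := by
    intro g hg
    have hne : (𝓝[((Γ ⊓ L : Subgroup K) : Set K)] g).NeBot :=
      mem_closure_iff_nhdsWithin_neBot.mp (hdense hg)
    set f : K → C(K, K) := fun a => ⟨(a * ·), continuous_mul_left a⟩ with hf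
    have hfc : Continuous f := by
      have : f = ⇑(ContinuousMap.curry ⟨fun p : K × K => p.1 * p.2, continuous_mul⟩) := by
        funext a; ext x; rfl
      rw [this]
      exact map_continuous _
    have hT : Tendsto (fun a => μ ((f a ⁻¹' B) ∆ (f g ⁻¹' B)))
        (𝓝[((Γ ⊓ L : Subgroup K) : Set K)] g) (𝓝 0) :=
      tendsto_measure_symmDiff_preimage_nhds_zero
        ((hfc.tendsto g).mono_left nhdsWithin_le_nhds)
        (Eventually.of_forall fun a => measurePreserving_mul_left μ a)
        (measurePreserving_mul_left μ g) hB.nullMeasurableSet (measure_ne_top μ B)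
    have hev : ∀ᶠ a in 𝓝[((Γ ⊓ L : Subgroup K) : Set K)] g,
        μ (((g * ·) ⁻¹' B) ∆ B) ≤ μ ((f a ⁻¹' B) ∆ (f g ⁻¹' B)) := by
      filter_upwards [eventually_mem_nhdsWithin] with a ha
      have h0 : μ ((f a ⁻¹' B) ∆ B) = 0 := hinvK a ha
      calc μ (((g * ·) ⁻¹' B) ∆ B)
          ≤ μ (((f g ⁻¹' B) ∆ (f a ⁻¹' B)) ∪ ((f a ⁻¹' B) ∆ B)) :=
            measure_mono (symmDiff_triangle _ _ _)
        _ ≤ μ ((f g ⁻¹' B) ∆ (f a ⁻¹' B)) + μ ((f a ⁻¹' B) ∆ B) := measure_union_le _ _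
        _ = μ ((f a ⁻¹' B) ∆ (f g ⁻¹' B)) := by rw [h0, add_zero, symmDiff_comm]
    have := ge_of_tendsto hT hev
    exact le_antisymm (by simpa using this) (zero_le)
  -- the Haar measure on a compact group is right invariant
  haveI : μ.IsMulRightInvariant := by
    constructor
    intro g
    haveI : IsProbabilityMeasure (Measure.map (· * g) μ) :=
      Measure.isProbabilityMeasure_map (measurable_mul_const g).aemeasurable
    exact Measure.isHaarMeasure_eq_of_isProbabilityMeasure _ μ
  -- Fubini argument
  set E : Set (K × K) := (fun p : K × K => (p.1 * p.2, p.2)) ⁻¹' ((B ×ˢ Bᶜ) ∪ (Bᶜ ×ˢ B))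
    with hEdef
  have hEmeas : MeasurableSet E :=
    ((measurable_fst.mul measurable_snd).prodMk measurable_snd)
      ((hB.prod hB.compl).union (hB.compl.prod hB))
  have hEsec : ∀ a : K, Prod.mk a ⁻¹' E = ((a * ·) ⁻¹' B) ∆ B := by
    intro a
    ext x
    simp only [hEdef, mem_preimage, Set.mem_union, Set.mem_prod, Set.mem_compl_iff,
      Set.mem_symmDiff]
    tauto
  have hE0 : ((μ.restrict (L : Set K)).prod μ) E = 0 := by
    rw [Measure.measure_prod_null hEmeas]
    refine (ae_restrict_iff' hL.measurableSet).mpr (ae_of_all _ fun a ha => ?_)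
    show μ (Prod.mk a ⁻¹' E) = 0
    rw [hEsec a]
    exact hinvL a ha
  have hswapE : MeasurableSet (Prod.swap ⁻¹' E : Set (K × K)) := measurable_swap hEmeas
  have hswap : (μ.prod (μ.restrict (L : Set K))) (Prod.swap ⁻¹' E) = 0 := by
    rw [← Measure.prod_swap, Measure.map_apply measurable_swap hswapE]
    have hid : (Prod.swap ⁻¹' (Prod.swap ⁻¹' E) : Set (K × K)) = E := by
      ext p; simp
    rw [hid]
    exact hE0
  have hae : ∀ᵐ x ∂μ, (μ.restrict (L : Set K)) (Prod.mk x ⁻¹' (Prod.swap ⁻¹' E)) = 0 :=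
    (Measure.measure_prod_null hswapE).mp hswap
  have hsec2 : ∀ x : K, Prod.mk x ⁻¹' (Prod.swap ⁻¹' E) =
      {a : K | (a * x ∈ B ∧ x ∉ B) ∨ (a * x ∉ B ∧ x ∈ B)} := by
    intro x
    ext a
    simp only [hEdef, mem_preimage, Prod.swap_prod_mk, Set.mem_union, Set.mem_prod,
      Set.mem_compl_iff, Set.mem_setOf_eq]
  by_cases hB0 : μ B = 0
  · left
    rw [Measure.map_apply hmk hA]
    exact hB0
  · right
    have hLMopen : IsOpen LM := hL.mul_right
    have hLMq : MeasurableSet (QuotientGroup.mk '' (L : Set K) : Set (K ⧸ M)) := by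
      have h' : MeasurableSet ((QuotientGroup.mk : K → K ⧸ M) ⁻¹' (QuotientGroup.mk '' (L : Set K))) :=
        hpre ▸ hLMopen.measurableSet
      exact h'
    rw [Measure.map_apply hmk (hLMq.diff hA), Set.preimage_diff, hpre]
    by_contra hC
    -- pick a density point x₀ in B
    obtain ⟨x₀, hx₀B, hx₀⟩ :=
      Measure.exists_mem_of_measure_ne_zero_of_ae hB0 (ae_restrict_of_ae hae)
    -- pick a density point x₁ in LM \ B
    obtain ⟨x₁, hx₁LM, hx₁⟩ :=
      Measure.exists_mem_of_measure_ne_zero_of_ae hC (ae_restrict_of_ae hae)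
    have hx₁B : x₁ ∉ B := hx₁LM.2
    -- rewrite the two null sets
    have h0 : μ ({a : K | a * x₀ ∉ B} ∩ L) = 0 := by
      have hset : Prod.mk x₀ ⁻¹' (Prod.swap ⁻¹' E) = {a : K | a * x₀ ∉ B} := by
        rw [hsec2 x₀]
        ext a
        simp [hx₀B]
      have hm : MeasurableSet {a : K | a * x₀ ∉ B} := (measurable_mul_const x₀) hB.compl
      rw [hset, Measure.restrict_apply hm] at hx₀
      exact hx₀
    have h1 : μ ({a : K | a * x₁ ∈ B} ∩ L) = 0 := by
      have hset : Prod.mk x₁ ⁻¹' (Prod.swap ⁻¹' E) = {a : K | a * x₁ ∈ B} := by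
        rw [hsec2 x₁]
        ext a
        simp [hx₁B]
      have hm : MeasurableSet {a : K | a * x₁ ∈ B} := (measurable_mul_const x₁) hB
      rw [hset, Measure.restrict_apply hm] at hx₁
      exact hx₁
    -- decompose x₀ and x₁
    obtain ⟨l₀, hl₀, m₀, hm₀, hx₀eq⟩ := Set.mem_mul.mp (hBLM hx₀B)
    obtain ⟨l₁, hl₁, m₁, hm₁, hx₁eq⟩ := Set.mem_mul.mp hx₁LM.1
    -- the two sets are right translates of each other
    have htrans : {a : K | a * x₀ ∈ B} ∩ L =
        (· * (l₀ * l₁⁻¹)) ⁻¹' ({a : K | a * x₁ ∈ B} ∩ L) := by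
      ext a
      simp only [Set.mem_inter_iff, Set.mem_setOf_eq, Set.mem_preimage, SetLike.mem_coe]
      constructor
      · rintro ⟨haB, haL⟩
        have h₁ : a * l₀ ∈ B := by
          have : a * x₀ * m₀⁻¹ ∈ B := hBM _ haB _ (inv_mem hm₀)
          have heq : a * x₀ * m₀⁻¹ = a * l₀ := by rw [← hx₀eq]; group
          rwa [heq] at this
        have h₂ : a * l₀ * m₁ ∈ B := hBM _ h₁ _ hm₁
        have heq : a * (l₀ * l₁⁻¹) * x₁ = a * l₀ * m₁ := by rw [← hx₁eq]; group
        exact ⟨by rw [heq]; exact h₂, mul_mem haL (mul_mem hl₀ (inv_mem hl₁))⟩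
      · rintro ⟨haB, haL⟩
        have h₁ : a * l₀ ∈ B := by
          have heq : a * (l₀ * l₁⁻¹) * x₁ = a * l₀ * m₁ := by rw [← hx₁eq]; group
          rw [heq] at haB
          have : a * l₀ * m₁ * m₁⁻¹ ∈ B := hBM _ haB _ (inv_mem hm₁)
          have heq2 : a * l₀ * m₁ * m₁⁻¹ = a * l₀ := by group
          rwa [heq2] at this
        have h₂ : a * x₀ ∈ B := by
          have : a * l₀ * m₀ ∈ B := hBM _ h₁ _ hm₀
          have heq : a * l₀ * m₀ = a * x₀ := by rw [← hx₀eq]; group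
          rwa [heq] at this
        have haL' : a ∈ L := by
          have : a * (l₀ * l₁⁻¹) * (l₁ * l₀⁻¹) ∈ L := mul_mem haL (mul_mem hl₁ (inv_mem hl₀))
          have heq : a * (l₀ * l₁⁻¹) * (l₁ * l₀⁻¹) = a := by group
          rwa [heq] at this
        exact ⟨h₂, haL'⟩
    have hμeq : μ ({a : K | a * x₀ ∈ B} ∩ L) = μ ({a : K | a * x₁ ∈ B} ∩ L) := by
      rw [htrans]
      exact measure_preimage_mul_right μ (l₀ * l₁⁻¹) _
    -- but the first set has full measure in L
    have hLsub : (L : Set K) ⊆ ({a : K | a * x₀ ∈ B} ∩ L) ∪ ({a : K | a * x₀ ∉ B} ∩ L) := by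
      intro a ha
      by_cases h : a * x₀ ∈ B
      · exact Or.inl ⟨h, ha⟩
      · exact Or.inr ⟨h, ha⟩
    have hLpos : 0 < μ (L : Set K) := hL.measure_pos μ ⟨1, L.one_mem⟩
    have : μ (L : Set K) = 0 := by
      refine le_antisymm ?_ (zero_le)
      calc μ (L : Set K)
          ≤ μ (({a : K | a * x₀ ∈ B} ∩ L) ∪ ({a : K | a * x₀ ∉ B} ∩ L)) := measure_mono hLsub
        _ ≤ μ ({a : K | a * x₀ ∈ B} ∩ L) + μ ({a : K | a * x₀ ∉ B} ∩ L) := measure_union_le _ _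
        _ = 0 := by rw [hμeq, h1, h0, add_zero]
    exact absurd this hLpos.ne'
end
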